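/- Let X be a geometric tree, T a labelled generic cellular merge tree, and suppose a configuration x∈Conf(X,T) has all its points on a subset Y⊆X homeomorphic to the unit interval via h, inducing the order x_{σ(1)}≤…≤x_{σ(n)}. Then for every node v of T, the set of indices j such that l_{σ(j)} is a descendant of v is an interval {i,…,k} of consecutive integers. -/

import Mathlib

open scoped Classical

noncomputable section

instance dartTop {V : Type*} (G : SimpleGraph V) : TopologicalSpace G.Dart := ⊥

/-- Gluing relation for the geometric realization of a graph: one copy of `[0,1]` per
oriented edge, opposite orientations identified by `t ↦ 1-t`, and starting points of edges
with the same initial vertex identified. -/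
def treeRel {V : Type*} (G : SimpleGraph V) :
    (G.Dart × ↥(Set.Icc (0:ℝ) 1)) → (G.Dart × ↥(Set.Icc (0:ℝ) 1)) → Prop :=
  fun p q =>
    (p.1 = q.1.symm ∧ (p.2 : ℝ) = 1 - (q.2 : ℝ)) ∨
    (p.1.toProd.1 = q.1.toProd.1 ∧ (p.2 : ℝ) = 0 ∧ (q.2 : ℝ) = 0)

/-- The geometric realization of a graph. -/
def TreeSpace {V : Type*} (G : SimpleGraph V) := Quot (treeRel G)

instance {V : Type*} (G : SimpleGraph V) : TopologicalSpace (TreeSpace G) :=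
  instTopologicalSpaceQuot
/-- Combinatorial data for a cellular merge tree: a finite rooted tree with a real value at
each node, strictly increasing towards the root; the root carries an infinite upward ray. -/
structure MergeTreeData where
  n : ℕ
  parent : Fin n → Fin n
  root : Fin n
  hroot : parent root = root
  hreach : ∀ v, ∃ k, parent^[k] v = root
  val : Fin n → ℝ
  hval : ∀ v, v ≠ root → val v < val (parent v)

namespace MergeTreeData

variable (d : MergeTreeData)

/-- Points of the edge attached below each node (for the root: the infinite upward ray). -/
def Carrier : Set (Fin d.n × ℝ) :=
  {p | d.val p.1 ≤ p.2 ∧ (p.1 ≠ d.root → p.2 ≤ d.val (d.parent p.1))}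

/-- Glue the top of each edge to the bottom of the parent's edge. -/
def glueRel : ↥d.Carrier → ↥d.Carrier → Prop := fun a b =>
  a.1.2 = b.1.2 ∧ d.parent a.1.1 = b.1.1 ∧ a.1.2 = d.val (d.parent a.1.1)

/-- The geometric realization of the cellular merge tree `d`. -/
def Space := Quot d.glueRel

instance : TopologicalSpace d.Space := instTopologicalSpaceQuot

/-- The gauge of the canonical cellular merge tree. -/
def gauge : d.Space → ℝ := Quot.lift (fun a => a.1.2) (fun _ _ h => h.1)

/-- `v` is a descendant of `w` (possibly `v = w`). -/
def Desc (v w : Fin d.n) : Prop := ∃ k, d.parent^[k] v = w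

def IsLeafNode (v : Fin d.n) : Prop := ∀ w, d.parent w = v → w = v

def IsBranchNode (v : Fin d.n) : Prop := 2 ≤ Nat.card {w : Fin d.n // d.parent w = v ∧ w ≠ v}

/-- Generic: binary (each node has zero or two children) and leaves take distinct values. -/
def Generic : Prop :=
  (∀ v, Nat.card {w : Fin d.n // d.parent w = v ∧ w ≠ v} = 0 ∨
        Nat.card {w : Fin d.n // d.parent w = v ∧ w ≠ v} = 2) ∧
  ∀ v w, d.IsLeafNode v → d.IsLeafNode w → v ≠ w → d.val v ≠ d.val w

/-- `a` is the least common ancestor of `u` and `w`. -/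
def IsLCA (u w a : Fin d.n) : Prop :=
  d.Desc u a ∧ d.Desc w a ∧ ∀ b, d.Desc u b → d.Desc w b → d.Desc a b

/-- The type of leaves. -/
def Leaf := {v : Fin d.n // d.IsLeafNode v}

end MergeTreeData

/-- Isomorphism of gauged spaces: a homeomorphism commuting with the gauges. -/
def GaugedIso {A B : Type*} [TopologicalSpace A] [TopologicalSpace B]
    (πA : A → ℝ) (πB : B → ℝ) : Prop :=
  ∃ e : A ≃ₜ B, ∀ x, πB (e x) = πA x

/-- A gauged space is a cellular merge tree if it is isomorphic (as a gauged space) to the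
realization of some combinatorial merge tree data. -/
def IsCellularMergeTree {A : Type*} [TopologicalSpace A] (π : A → ℝ) : Prop :=
  ∃ d : MergeTreeData, GaugedIso d.gauge π
/-- The convex hull of a subset of a tree: the intersection of all closed connected
(preconnected) supersets. -/
def ConvH {X : Type*} [TopologicalSpace X] (A : Set X) : Set X :=
  ⋂₀ {C : Set X | A ⊆ C ∧ IsClosed C ∧ IsPreconnected C}

/-- The hull `Conv(v)` associated to a node `v`: convex hull of the union of the sets
indexed by the leaves descendant from `v`. -/
def hullOf {X : Type*} [TopologicalSpace X] (d : MergeTreeData)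
    (F : d.Leaf → Set X) (v : Fin d.n) : Set X :=
  ConvH (⋃ l : d.Leaf, if d.Desc l.1 v then F l else ∅)

/-- The hull-compatibility constraint defining the constrained configuration spaces: hulls
of incomparable nodes are disjoint. -/
def HullCond {X : Type*} [TopologicalSpace X] (d : MergeTreeData) (F : d.Leaf → Set X) : Prop :=
  ∀ v w : Fin d.n, (hullOf d F v ∩ hullOf d F w).Nonempty → d.Desc v w ∨ d.Desc w v

/-- Membership in the constrained point configuration space `Conf(X,T)`. -/
def ConfCond {X : Type*} [TopologicalSpace X] (d : MergeTreeData) (x : d.Leaf → X) : Prop :=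
  Function.Injective x ∧ HullCond d (fun l => ({x l} : Set X))


/-! ### Auxiliary lemmas for the proof of `stmt18` -/

section AuxProof

open SimpleGraph

/-- The separation lemma, auxiliary version: both endpoints strictly below the level `t`. -/
lemma sepAux {X : Type*} [TopologicalSpace X] (f : X → ℝ) (hf : Continuous f)
    (γ : ℝ → X) (hγ : Continuous γ) (a b m : ℝ) (ham : a < m) (hmb : m < b)
    (hinj : Set.InjOn γ (Set.Icc a b)) (t ε : ℝ)
    (ht : f (γ m) = t) (hε : 0 < ε)
    (hfib : ∀ c : ℝ, |c - t| < ε → ∀ y z, f y = c → f z = c → y = z)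
    (hfa : f (γ a) < t) (hfb : f (γ b) < t) : False := by
  set φ : ℝ → ℝ := f ∘ γ with hφ
  have hφc : Continuous φ := hf.comp hγ
  have hφm : φ m = t := ht
  have hN : IsOpen (φ ⁻¹' Set.Ioo (t - ε) (t + ε)) := isOpen_Ioo.preimage hφc
  have hmN : m ∈ φ ⁻¹' Set.Ioo (t - ε) (t + ε) := by
    simp only [Set.mem_preimage, Set.mem_Ioo, hφm]
    constructor <;> linarith
  obtain ⟨δ, hδ, hball⟩ := Metric.isOpen_iff.mp hN m hmN
  set δ₀ := min δ (min (m - a) (b - m)) with hδ₀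
  have hδ₀pos : 0 < δ₀ := lt_min hδ (lt_min (by linarith) (by linarith))
  have hd1 : δ₀ ≤ δ := min_le_left _ _
  have hd2 : δ₀ ≤ m - a := le_trans (min_le_right _ _) (min_le_left _ _)
  have hd3 : δ₀ ≤ b - m := le_trans (min_le_right _ _) (min_le_right _ _)
  set s₁ := m - δ₀ / 2 with hs₁def
  set s₂ := m + δ₀ / 2 with hs₂def
  have hs₁m : s₁ < m := by simp only [hs₁def]; linarith
  have has₁ : a < s₁ := by simp only [hs₁def]; linarith
  have hms₂ : m < s₂ := by simp only [hs₂def]; linarith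
  have hs₂b : s₂ < b := by simp only [hs₂def]; linarith
  have hc₁ : φ s₁ ∈ Set.Ioo (t - ε) (t + ε) := by
    apply hball
    rw [Metric.mem_ball, Real.dist_eq, abs_lt]
    constructor <;> simp only [hs₁def] <;> linarith
  have hc₂ : φ s₂ ∈ Set.Ioo (t - ε) (t + ε) := by
    apply hball
    rw [Metric.mem_ball, Real.dist_eq, abs_lt]
    constructor <;> simp only [hs₂def] <;> linarith
  have hft : ∀ s ∈ Set.Icc a b, φ s = t → s = m := by
    intro s hs hst
    exact hinj hs ⟨ham.le, hmb.le⟩ (hfib t (by simpa using hε) _ _ hst ht)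
  have hc₁t : φ s₁ ≠ t := by
    intro hh
    have := hft s₁ ⟨has₁.le, by linarith⟩ hh
    linarith
  have hc₂t : φ s₂ ≠ t := by
    intro hh
    have := hft s₂ ⟨by linarith, hs₂b.le⟩ hh
    linarith
  rcases lt_or_gt_of_ne hc₁t with h1 | h1
  · rcases lt_or_gt_of_ne hc₂t with h2 | h2
    · -- both local values below t : use a common level c
      set c := max (φ s₁) (φ s₂) with hc
      have hct : c < t := max_lt h1 h2
      obtain ⟨u₁, hu₁, hu₁c⟩ := intermediate_value_Icc hs₁m.le hφc.continuousOn
        (show c ∈ Set.Icc (φ s₁) (φ m) from ⟨le_max_left _ _, by rw [hφm]; exact hct.le⟩)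
      obtain ⟨u₂, hu₂, hu₂c⟩ := intermediate_value_Icc' hms₂.le hφc.continuousOn
        (show c ∈ Set.Icc (φ s₂) (φ m) from ⟨le_max_right _ _, by rw [hφm]; exact hct.le⟩)
      have hcε : |c - t| < ε := by
        rw [abs_lt]
        constructor
        · have := le_max_left (φ s₁) (φ s₂)
          have := hc₁.1
          linarith
        · linarith
      have hγu : γ u₁ = γ u₂ := hfib c hcε _ _ hu₁c hu₂c
      have hu12 : u₁ = u₂ := hinj
        ⟨le_trans has₁.le hu₁.1, le_trans hu₁.2 hmb.le⟩
        ⟨le_trans ham.le hu₂.1, le_trans hu₂.2 hs₂b.le⟩ hγu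
      have hu₁m : u₁ = m := le_antisymm hu₁.2 (hu12 ▸ hu₂.1)
      rw [hu₁m, hφm] at hu₁c
      linarith
    · -- φ s₂ > t, endpoint b below: t is crossed on [s₂, b]
      obtain ⟨u, hu, huc⟩ := intermediate_value_Icc' hs₂b.le hφc.continuousOn
        (show t ∈ Set.Icc (φ b) (φ s₂) from ⟨hfb.le, h2.le⟩)
      have := hft u ⟨by linarith [hu.1], hu.2⟩ huc
      have : m < u := lt_of_lt_of_le hms₂ hu.1
      linarith [hft u ⟨by linarith [hu.1], hu.2⟩ huc]
  · -- φ s₁ > t, endpoint a below: t is crossed on [a, s₁]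
    obtain ⟨u, hu, huc⟩ := intermediate_value_Icc has₁.le hφc.continuousOn
      (show t ∈ Set.Icc (φ a) (φ s₁) from ⟨hfa.le, h1.le⟩)
    have hum := hft u ⟨hu.1, by linarith [hu.2]⟩ huc
    have : u < m := lt_of_le_of_lt hu.2 hs₁m
    linarith [hum ▸ this]

/-- The separation lemma: if `f` is continuous with subsingleton fibres near the level
`t = f (γ m)`, `γ` is an injective path and `C` is preconnected containing `γ a` and
`γ b` with `a < m < b`, then `γ m ∈ C`. -/
lemma sepLemma {X : Type*} [TopologicalSpace X] (f : X → ℝ) (hf : Continuous f)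
    (γ : ℝ → X) (hγ : Continuous γ) (a b m : ℝ) (ham : a < m) (hmb : m < b)
    (hinj : Set.InjOn γ (Set.Icc a b)) (t ε : ℝ)
    (ht : f (γ m) = t) (hε : 0 < ε)
    (hfib : ∀ c : ℝ, |c - t| < ε → ∀ y z, f y = c → f z = c → y = z)
    (C : Set X) (hC : IsPreconnected C) (ha : γ a ∈ C) (hb : γ b ∈ C) : γ m ∈ C := by
  by_contra hq
  have hCt : ∀ y ∈ C, f y ≠ t := by
    intro y hy hyt
    exact hq ((hfib t (by simpa using hε) y (γ m) hyt ht) ▸ hy)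
  have hcov : C ⊆ f ⁻¹' Set.Iio t ∪ f ⁻¹' Set.Ioi t := by
    intro y hy
    rcases lt_or_gt_of_ne (hCt y hy) with h' | h'
    · exact Or.inl h'
    · exact Or.inr h'
  have hboth : ¬((f (γ a) < t ∧ t < f (γ b)) ∨ (f (γ b) < t ∧ t < f (γ a))) := by
    rintro (⟨hu, hw⟩ | ⟨hu, hw⟩)
    · obtain ⟨y, hy⟩ := hC (f ⁻¹' Set.Iio t) (f ⁻¹' Set.Ioi t) (isOpen_Iio.preimage hf) (isOpen_Ioi.preimage hf) hcov
        ⟨γ a, ha, hu⟩ ⟨γ b, hb, hw⟩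
      have hlt' : f y < t := hy.2.1
      have hgt' : t < f y := hy.2.2
      exact lt_asymm hlt' hgt'
    · obtain ⟨y, hy⟩ := hC (f ⁻¹' Set.Iio t) (f ⁻¹' Set.Ioi t) (isOpen_Iio.preimage hf) (isOpen_Ioi.preimage hf) hcov
        ⟨γ b, hb, hu⟩ ⟨γ a, ha, hw⟩
      have hlt' : f y < t := hy.2.1
      have hgt' : t < f y := hy.2.2
      exact lt_asymm hlt' hgt'
  rcases lt_or_gt_of_ne (hCt _ ha) with h1 | h1
  · have h3 : f (γ b) < t := by
      rcases lt_or_gt_of_ne (hCt _ hb) with h' | h'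
      · exact h'
      · exact absurd (Or.inl ⟨h1, h'⟩) hboth
    exact sepAux f hf γ hγ a b m ham hmb hinj t ε ht hε hfib h1 h3
  · have h3 : t < f (γ b) := by
      rcases lt_or_gt_of_ne (hCt _ hb) with h' | h'
      · exact absurd (Or.inr ⟨h', h1⟩) hboth
      · exact h'
    refine sepAux (fun y => 2 * t - f y) (continuous_const.sub hf) γ hγ a b m ham hmb hinj t ε
      ?_ hε ?_ ?_ ?_
    · show 2 * t - f (γ m) = t
      rw [ht]; ring
    · intro c hc y z hy hz
      have hy' : f y = 2 * t - c := by
        have : 2 * t - f y = c := hy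
        linarith
      have hz' : f z = 2 * t - c := by
        have : 2 * t - f z = c := hz
        linarith
      refine hfib (2 * t - c) ?_ y z hy' hz'
      rw [show 2 * t - c - t = -(c - t) by ring, abs_neg]
      exact hc
    · show 2 * t - f (γ a) < t
      linarith
    · show 2 * t - f (γ b) < t
      linarith

variable {V : Type} (G : SimpleGraph V)

instance : DiscreteTopology G.Dart := ⟨rfl⟩

/-- Given a dart `e`, this function records on which side of the (bridge) edge of `e` a
vertex lies: `1` on the side of the head of `e`, `0` on the other side. -/
def sideFun (e : G.Dart) : V → ℝ :=
  fun w => if (G.deleteEdges {e.edge}).Reachable w e.toProd.2 then 1 else 0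

/-- The function on darts×interval inducing the level function on `TreeSpace G`. -/
def gFun (e : G.Dart) : (G.Dart × ↥(Set.Icc (0:ℝ) 1)) → ℝ :=
  fun p => (1 - (p.2 : ℝ)) * sideFun G e p.1.toProd.1 + (p.2 : ℝ) * sideFun G e p.1.toProd.2

lemma gFun_comp (e : G.Dart) : ∀ p q, treeRel G p q → gFun G e p = gFun G e q := by
  rintro ⟨dp, up⟩ ⟨dq, uq⟩ (⟨h1, h2⟩ | ⟨h1, h2, h3⟩)
  · have h1' : dp = dq.symm := h1
    have h2' : (up : ℝ) = 1 - (uq : ℝ) := h2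
    subst h1'
    simp only [gFun, SimpleGraph.Dart.symm_toProd, Prod.fst_swap, Prod.snd_swap, h2']
    ring
  · have h1' : dp.toProd.1 = dq.toProd.1 := h1
    have h2' : (up : ℝ) = 0 := h2
    have h3' : (uq : ℝ) = 0 := h3
    simp only [gFun, h1', h2', h3']
    ring

/-- The level function on `TreeSpace G` associated to a dart `e`. -/
def fFun (e : G.Dart) : TreeSpace G → ℝ := Quot.lift (gFun G e) (gFun_comp G e)

lemma fFun_continuous (e : G.Dart) : Continuous (fFun G e) := by
  apply continuous_quot_lift
  have c1 : Continuous (fun p : G.Dart × ↥(Set.Icc (0:ℝ) 1) => sideFun G e p.1.toProd.1) :=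
    Continuous.comp (continuous_of_discreteTopology
      (f := fun d : G.Dart => sideFun G e d.toProd.1)) continuous_fst
  have c2 : Continuous (fun p : G.Dart × ↥(Set.Icc (0:ℝ) 1) => sideFun G e p.1.toProd.2) :=
    Continuous.comp (continuous_of_discreteTopology
      (f := fun d : G.Dart => sideFun G e d.toProd.2)) continuous_fst
  have c3 : Continuous (fun p : G.Dart × ↥(Set.Icc (0:ℝ) 1) => ((p.2 : ℝ))) :=
    continuous_subtype_val.comp continuous_snd
  exact ((continuous_const.sub c3).mul c1).add (c3.mul c2)

/-- The key properties of the level function: it reads off the coordinate on the edge of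
`e`, and its fibres over `(0,1)` are single points of `TreeSpace G`. -/
lemma fFun_spec (hacyc : G.IsAcyclic) (e : G.Dart) :
    (∀ u : ↥(Set.Icc (0:ℝ) 1), fFun G e (Quot.mk _ (e, u)) = u) ∧
    (∀ c : ℝ, 0 < c → c < 1 → ∀ y z : TreeSpace G, fFun G e y = c → fFun G e z = c → y = z) := by
  classical
  have hs01 : ∀ w, sideFun G e w = 0 ∨ sideFun G e w = 1 := by
    intro w
    by_cases hw : (G.deleteEdges {e.edge}).Reachable w e.toProd.2 <;> simp [sideFun, hw]
  have hs2 : sideFun G e e.toProd.2 = 1 := by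
    unfold sideFun
    exact if_pos (SimpleGraph.Reachable.refl _)
  have hbr : G.IsBridge e.edge :=
    (isAcyclic_iff_forall_edge_isBridge.mp hacyc) e.edge_mem
  have hedge : e.edge = s(e.toProd.1, e.toProd.2) := rfl
  have hs1 : sideFun G e e.toProd.1 = 0 := by
    have hnr : ¬(G.deleteEdges {e.edge}).Reachable e.toProd.1 e.toProd.2 := by
      have := isBridge_iff.mp (hedge ▸ hbr)
      rw [hedge]
      exact this
    simp [sideFun, hnr]
  have hsame : ∀ d : G.Dart, d.edge ≠ e.edge →
      sideFun G e d.toProd.1 = sideFun G e d.toProd.2 := by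
    intro d hd
    have hadj : (G.deleteEdges {e.edge}).Adj d.toProd.1 d.toProd.2 := by
      rw [SimpleGraph.deleteEdges_adj]
      exact ⟨d.adj, by simpa [SimpleGraph.Dart.edge] using hd⟩
    have hre := hadj.reachable
    simp only [sideFun]
    by_cases h2 : (G.deleteEdges {e.edge}).Reachable d.toProd.2 e.toProd.2
    · rw [if_pos (hre.trans h2), if_pos h2]
    · rw [if_neg (fun h1 => h2 (hre.symm.trans h1)), if_neg h2]
  have hval : ∀ u : ↥(Set.Icc (0:ℝ) 1), fFun G e (Quot.mk _ (e, u)) = u := by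
    intro u
    show gFun G e (e, u) = (u : ℝ)
    simp only [gFun, hs1, hs2]
    ring
  refine ⟨hval, ?_⟩
  have hkey : ∀ (c : ℝ) (hc0 : 0 < c) (hc1 : c < 1) (p : G.Dart × ↥(Set.Icc (0:ℝ) 1)),
      gFun G e p = c →
      Quot.mk (treeRel G) p = Quot.mk (treeRel G) (e, ⟨c, hc0.le, hc1.le⟩) := by
    rintro c hc0 hc1 ⟨dd, uu⟩ hpc
    rcases hs01 dd.toProd.1 with ha | ha <;> rcases hs01 dd.toProd.2 with hb | hb
    · exfalso
      simp only [gFun, ha, hb, mul_zero, add_zero] at hpc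
      linarith
    · -- dd goes from side 0 to side 1 : dd = e
      have hne : dd.edge = e.edge := by
        by_contra hne
        rw [hsame dd hne, hb] at ha
        norm_num at ha
      rcases (SimpleGraph.dart_edge_eq_iff dd e).mp hne with rfl | rfl
      · simp only [gFun, ha, hb, mul_zero, mul_one, zero_add] at hpc
        have : uu = (⟨c, hc0.le, hc1.le⟩ : ↥(Set.Icc (0:ℝ) 1)) := Subtype.ext hpc
        rw [this]
      · exfalso
        have : e.symm.toProd.1 = e.toProd.2 := rfl
        rw [this, hs2] at ha
        norm_num at ha
    · -- dd goes from side 1 to side 0 : dd = e.symm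
      have hne : dd.edge = e.edge := by
        by_contra hne
        rw [hsame dd hne, hb] at ha
        norm_num at ha
      rcases (SimpleGraph.dart_edge_eq_iff dd e).mp hne with rfl | rfl
      · exfalso
        rw [hs1] at ha
        norm_num at ha
      · simp only [gFun, ha, hb, mul_zero, mul_one, add_zero] at hpc
        have huu : (uu : ℝ) = 1 - c := by linarith
        exact Quot.sound (Or.inl ⟨rfl, by rw [huu]⟩)
    · exfalso
      simp only [gFun, ha, hb, mul_one] at hpc
      have : (1:ℝ) = c := by linarith
      linarith
  intro c hc0 hc1 y z hy hz
  induction y using Quot.ind with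
  | _ p =>
    induction z using Quot.ind with
    | _ q =>
      rw [hkey c hc0 hc1 p hy, hkey c hc0 hc1 q hz]

/-- Main topological lemma: in the realization of a finite tree, a point lying (in the
order of an embedded arc) between two points of a closed preconnected set belongs to
that set. -/
lemma betweenMem {V : Type} [Fintype V] (G : SimpleGraph V) (hacyc : G.IsAcyclic)
    (Y : Set (TreeSpace G)) (h : ↥Y ≃ₜ ↥unitInterval)
    (p₁ p₂ p₃ : TreeSpace G) (hp₁ : p₁ ∈ Y) (hp₂ : p₂ ∈ Y) (hp₃ : p₃ ∈ Y)
    (h12 : ((h ⟨p₁, hp₁⟩ : ↥unitInterval) : ℝ) ≤ ((h ⟨p₂, hp₂⟩ : ↥unitInterval) : ℝ))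
    (h23 : ((h ⟨p₂, hp₂⟩ : ↥unitInterval) : ℝ) ≤ ((h ⟨p₃, hp₃⟩ : ↥unitInterval) : ℝ))
    (C : Set (TreeSpace G)) (hCc : IsClosed C) (hCp : IsPreconnected C)
    (h1 : p₁ ∈ C) (h3 : p₃ ∈ C) : p₂ ∈ C := by
  classical
  -- if the parameters coincide, the points coincide
  have hpeq : ∀ (p q : TreeSpace G) (hp : p ∈ Y) (hq : q ∈ Y),
      ((h ⟨p, hp⟩ : ↥unitInterval) : ℝ) = ((h ⟨q, hq⟩ : ↥unitInterval) : ℝ) → p = q := by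
    intro p q hp hq hpq
    have := h.injective (Subtype.ext hpq)
    exact congrArg Subtype.val this
  rcases eq_or_lt_of_le h12 with heq | hlt1
  · exact (hpeq p₁ p₂ hp₁ hp₂ heq) ▸ h1
  rcases eq_or_lt_of_le h23 with heq | hlt2
  · exact (hpeq p₂ p₃ hp₂ hp₃ heq).symm ▸ h3
  -- the parametrizing path
  set a : ℝ := ((h ⟨p₁, hp₁⟩ : ↥unitInterval) : ℝ) with hadef
  set m : ℝ := ((h ⟨p₂, hp₂⟩ : ↥unitInterval) : ℝ) with hmdef
  set b : ℝ := ((h ⟨p₃, hp₃⟩ : ↥unitInterval) : ℝ) with hbdef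
  have ha01 : a ∈ Set.Icc (0:ℝ) 1 := (h ⟨p₁, hp₁⟩).2
  have hm01 : m ∈ Set.Icc (0:ℝ) 1 := (h ⟨p₂, hp₂⟩).2
  have hb01 : b ∈ Set.Icc (0:ℝ) 1 := (h ⟨p₃, hp₃⟩).2
  set γ : ℝ → TreeSpace G :=
    fun r => ((h.symm (Set.projIcc 0 1 zero_le_one r) : ↥Y) : TreeSpace G) with hγdef
  have hγcont : Continuous γ :=
    continuous_subtype_val.comp (h.symm.continuous.comp continuous_projIcc)
  have hγinj : Set.InjOn γ (Set.Icc 0 1) := by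
    intro r hr r' hr' hrr
    have e1 : Set.projIcc 0 1 zero_le_one r = ⟨r, hr⟩ := Set.projIcc_of_mem _ hr
    have e2 : Set.projIcc 0 1 zero_le_one r' = ⟨r', hr'⟩ := Set.projIcc_of_mem _ hr'
    have h2 := h.symm.injective (Subtype.ext hrr :
      h.symm (Set.projIcc 0 1 zero_le_one r) = h.symm (Set.projIcc 0 1 zero_le_one r'))
    rw [e1, e2] at h2
    exact congrArg Subtype.val h2
  have hγval : ∀ (p : TreeSpace G) (hp : p ∈ Y),
      γ ((h ⟨p, hp⟩ : ↥unitInterval) : ℝ) = p := by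
    intro p hp
    have hmem : ((h ⟨p, hp⟩ : ↥unitInterval) : ℝ) ∈ Set.Icc (0:ℝ) 1 := (h ⟨p, hp⟩).2
    show ((h.symm (Set.projIcc 0 1 zero_le_one _) : ↥Y) : TreeSpace G) = p
    rw [Set.projIcc_of_mem zero_le_one hmem]
    have : (⟨_, hmem⟩ : ↥unitInterval) = h ⟨p, hp⟩ := Subtype.ext rfl
    rw [this, Homeomorph.symm_apply_apply]
  have hγa : γ a = p₁ := hγval p₁ hp₁
  have hγm : γ m = p₂ := hγval p₂ hp₂
  have hγb : γ b = p₃ := hγval p₃ hp₃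
  -- the finite set of vertex points
  haveI : Finite G.Dart := Finite.of_injective _ SimpleGraph.Dart.toProd_injective
  set f0 : G.Dart → TreeSpace G := fun d => Quot.mk _ (d, ⟨0, by norm_num⟩) with hf0
  set f1 : G.Dart → TreeSpace G := fun d => Quot.mk _ (d, ⟨1, by norm_num⟩) with hf1
  set VP : Set (TreeSpace G) := Set.range f0 ∪ Set.range f1 with hVP
  have hVPfin : VP.Finite := (Set.finite_range f0).union (Set.finite_range f1)
  have hclass : ∀ p : TreeSpace G, p ∉ VP → ∃ (e : G.Dart) (u : ℝ) (h0 : 0 < u) (h1 : u < 1),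
      p = Quot.mk (treeRel G) (e, ⟨u, h0.le, h1.le⟩) := by
    intro p hp
    rw [hVP] at hp
    induction p using Quot.ind with
    | _ q =>
      obtain ⟨d, u⟩ := q
      obtain ⟨hu0, hu1⟩ := u.2
      rcases eq_or_lt_of_le hu0 with h0 | h0
      · exfalso
        apply hp
        refine Set.mem_union_left _ ⟨d, ?_⟩
        rw [hf0]
        exact congrArg _ (congrArg _ (Subtype.ext h0))
      rcases eq_or_lt_of_le hu1 with h1 | h1
      · exfalso
        apply hp
        refine Set.mem_union_right _ ⟨d, ?_⟩
        rw [hf1]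
        exact congrArg _ (congrArg _ (Subtype.ext h1.symm))
      · exact ⟨d, (u : ℝ), h0, h1,
          congrArg _ (congrArg _ (Subtype.ext rfl))⟩
  -- every interior-edge point strictly between belongs to C
  have hIcc : Set.Icc a b ⊆ Set.Icc (0:ℝ) 1 := Set.Icc_subset_Icc ha01.1 hb01.2
  have key : ∀ r ∈ Set.Ioo a b, γ r ∉ VP → γ r ∈ C := by
    intro r hr hrV
    obtain ⟨e, u, hu0, hu1, hpe⟩ := hclass (γ r) hrV
    obtain ⟨hfe, hfib⟩ := fFun_spec G hacyc e
    have hfγr : fFun G e (γ r) = u := by rw [hpe]; exact hfe ⟨u, hu0.le, hu1.le⟩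
    have hεpos : (0:ℝ) < min u (1 - u) := lt_min hu0 (by linarith)
    have hfib' : ∀ c : ℝ, |c - u| < min u (1 - u) →
        ∀ y z, fFun G e y = c → fFun G e z = c → y = z := by
      intro c hc y z
      obtain ⟨hcl, hcr⟩ := abs_lt.mp hc
      have hl := min_le_left u (1 - u)
      have hrr := min_le_right u (1 - u)
      exact hfib c (by linarith) (by linarith) y z
    have := sepLemma (fFun G e) (fFun_continuous G e) γ hγcont a b r hr.1 hr.2
      (hγinj.mono hIcc) u (min u (1 - u)) hfγr hεpos hfib' C hCp
      (hγa ▸ h1) (hγb ▸ h3)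
    exact this
  -- density argument
  set B : Set ℝ := Set.Icc a b ∩ γ ⁻¹' VP with hB
  have hBfin : B.Finite := by
    have himg : (γ '' B).Finite := hVPfin.subset (by rintro _ ⟨r, hr, rfl⟩; exact hr.2)
    exact Set.Finite.of_finite_image himg (hγinj.mono (fun r hr => hIcc hr.1))
  have hmcl : m ∈ closure (Set.Ioo a b \ γ ⁻¹' VP) := by
    rw [Metric.mem_closure_iff]
    intro ε hε
    have hlt : max a (m - ε) < m := max_lt hlt1 (by linarith)
    have hinf : (Set.Ioo (max a (m - ε)) m \ B).Infinite :=
      (Set.Ioo_infinite hlt).diff hBfin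
    obtain ⟨r, hrI, hrB⟩ := hinf.nonempty
    have hra : a < r := lt_of_le_of_lt (le_max_left _ _) hrI.1
    have hrb : r < b := hrI.2.trans hlt2
    refine ⟨r, ⟨⟨hra, hrb⟩, ?_⟩, ?_⟩
    · intro hrV
      exact hrB ⟨⟨hra.le, hrb.le⟩, hrV⟩
    · rw [Real.dist_eq, abs_lt]
      have := lt_of_le_of_lt (le_max_right a (m - ε)) hrI.1
      constructor <;> linarith [hrI.2]
  have hsubA : Set.Ioo a b \ γ ⁻¹' VP ⊆ Set.Icc a b ∩ γ ⁻¹' C := by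
    rintro r ⟨hr1, hr2⟩
    exact ⟨⟨hr1.1.le, hr1.2.le⟩, key r hr1 hr2⟩
  have hAclosed : IsClosed (Set.Icc a b ∩ γ ⁻¹' C) := isClosed_Icc.inter (hCc.preimage hγcont)
  have hmA : m ∈ Set.Icc a b ∩ γ ⁻¹' C :=
    hAclosed.closure_subset ((closure_mono hsubA) hmcl)
  have hfin : γ m ∈ C := hmA.2
  rwa [hγm] at hfin

/-- A set is contained in its hull. -/
lemma subset_ConvH {X : Type*} [TopologicalSpace X] (A : Set X) : A ⊆ ConvH A :=
  fun x hx => Set.mem_sInter.mpr fun _ hC => hC.1 hx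

/-- Any iterated ancestor chain ending at a leaf is constant. -/
lemma leaf_desc_eq (d : MergeTreeData) {w : Fin d.n} (hw : d.IsLeafNode w) :
    ∀ (k : ℕ) (u : Fin d.n), d.parent^[k] u = w → u = w := by
  intro k
  induction k with
  | zero => intro u hu; simpa using hu
  | succ k ih =>
    intro u hu
    rw [Function.iterate_succ_apply'] at hu
    exact ih u (hw _ hu)

end AuxProof

/-- If a configuration `x ∈ Conf(X,T)` has all its points on a subset `Y ⊆ X` homeomorphic
to the unit interval via `h`, then for every node `v` of `T` the set of leaves descending
from `v` is an interval with respect to the induced order: it is closed under betweenness. -/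
theorem stmt18 {V : Type} [Fintype V] (G : SimpleGraph V)
    (hconn : G.Connected) (hacyc : G.IsAcyclic)
    (d : MergeTreeData) (hgen : d.Generic)
    (x : d.Leaf → TreeSpace G) (hx : ConfCond d x)
    (Y : Set (TreeSpace G)) (h : ↥Y ≃ₜ ↥unitInterval) (hY : ∀ l, x l ∈ Y)
    (v : Fin d.n) (l₁ l₂ l₃ : d.Leaf)
    (h12 : ((h ⟨x l₁, hY l₁⟩ : ↥unitInterval) : ℝ) ≤ ((h ⟨x l₂, hY l₂⟩ : ↥unitInterval) : ℝ))
    (h23 : ((h ⟨x l₂, hY l₂⟩ : ↥unitInterval) : ℝ) ≤ ((h ⟨x l₃, hY l₃⟩ : ↥unitInterval) : ℝ))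
    (hd1 : d.Desc l₁.1 v) (hd3 : d.Desc l₃.1 v) :
    d.Desc l₂.1 v := by
  classical
  obtain ⟨hinj, hhull⟩ := hx
  have hmem2 : x l₂ ∈ hullOf d (fun l => ({x l} : Set (TreeSpace G))) v := by
    simp only [hullOf, ConvH]
    refine Set.mem_sInter.mpr fun C hC => ?_
    obtain ⟨hSC, hCc, hCp⟩ := hC
    have h1C : x l₁ ∈ C := hSC (Set.mem_iUnion.mpr ⟨l₁, by rw [if_pos hd1]; exact rfl⟩)
    have h3C : x l₃ ∈ C := hSC (Set.mem_iUnion.mpr ⟨l₃, by rw [if_pos hd3]; exact rfl⟩)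
    exact betweenMem G hacyc Y h (x l₁) (x l₂) (x l₃) (hY l₁) (hY l₂) (hY l₃)
      h12 h23 C hCc hCp h1C h3C
  have hmem2' : x l₂ ∈ hullOf d (fun l => ({x l} : Set (TreeSpace G))) l₂.1 :=
    subset_ConvH _ (Set.mem_iUnion.mpr ⟨l₂, by rw [if_pos ⟨0, rfl⟩]; exact rfl⟩)
  rcases hhull v l₂.1 ⟨x l₂, hmem2, hmem2'⟩ with hvd | hdv
  · obtain ⟨k, hk⟩ := hvd
    have hveq : v = l₂.1 := leaf_desc_eq d l₂.2 k v hk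
    exact ⟨0, hveq.symm⟩
  · exact hdv
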